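/- Suppose w ∈ 𝕴(θ) is a nonidentity twisted involution such that no reduced expression s_1...s_k for w satisfies θ(s_1) = s_k. Then for any reduced expression s_1...s_k of w, one has ℓ(w·θ(s_1)) < ℓ(w) and w = s_2 ⋯ s_k · θ(s_1); consequently v = w·θ(s_1) = s_2⋯s_k is a twisted involution with ℓ(v) = ℓ(w) − 1. -/

import Mathlib

set_option linter.unusedSectionVars false
set_option linter.unusedVariables false

/-- The set of twisted involutions `𝕴(θ) = {w ∈ W : θ(w) = w⁻¹}`. -/
def twistedInvolutions {W : Type*} [Group W] (θ : W ≃* W) : Set W :=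
  {w : W | θ w = w⁻¹}

namespace ExchangeAux

open List CoxeterSystem

variable {B W : Type*} [Group W] {M : CoxeterMatrix B} (cs : CoxeterSystem M W)

local prefix:100 "s" => cs.simple
local prefix:100 "π" => cs.wordProd
local prefix:100 "ℓ" => cs.length

noncomputable def ind (x t : W) : ZMod 2 :=
  letI := Classical.dec (x = t); if x = t then 1 else 0

lemma ind_congr {x t y u : W} (h : (x = t) ↔ (y = u)) : ind x t = ind y u := by
  unfold ind
  split_ifs with h1 h2 h2
  · rfl
  · exact absurd (h.mp h1) h2
  · exact absurd (h.mpr h2) h1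
  · rfl


/-- Sum of indicators over a list. -/
noncomputable def indSum (x : W) (ts : List W) : ZMod 2 := (ts.map (ind x)).sum

@[simp] lemma indSum_nil (x : W) : indSum x ([] : List W) = 0 := rfl

lemma indSum_cons (x t : W) (ts : List W) :
    indSum x (t :: ts) = ind x t + indSum x ts := by simp [indSum]

lemma indSum_concat (x t : W) (ts : List W) :
    indSum x (ts.concat t) = indSum x ts + ind x t := by simp [indSum]

lemma ind_self (x : W) : ind x x = 1 := by simp [ind]

lemma ind_of_ne {x t : W} (h : x ≠ t) : ind x t = 0 := by simp [ind, h]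

lemma indSum_eq_zero_of_not_mem {x : W} {ts : List W} (h : x ∉ ts) : indSum x ts = 0 := by
  induction ts with
  | nil => rfl
  | cons t ts ih =>
    rw [indSum_cons, ind_of_ne (by simp at h; exact h.1), ih (by simp at h; exact h.2), add_zero]

lemma zmod2_add_self (c : ZMod 2) : c + c = 0 := by revert c; decide

/-- The function underlying the permutation `σ_i` of `W × ZMod 2`. -/
noncomputable def sigmaFun (i : B) : W × ZMod 2 → W × ZMod 2 :=
  fun x => (s i * x.1 * s i, x.2 + ind x.1 (s i))

lemma sigmaFun_involutive (i : B) : Function.Involutive (sigmaFun cs i) := by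
  intro x
  unfold sigmaFun
  have h1 : s i * (s i * x.1 * s i) * s i = x.1 := by
    rw [mul_assoc (s i) x.1, cs.simple_mul_simple_cancel_left,
      cs.simple_mul_simple_cancel_right]
  have h2 : ind (s i * x.1 * s i) (s i) = ind x.1 (s i) := by
    apply ind_congr
    constructor
    · intro h
      have := h1
      rw [h] at this
      rw [cs.simple_mul_simple_self, one_mul] at this
      exact this.symm
    · intro h
      rw [h, cs.simple_mul_simple_self, one_mul]
  simp only [h1, h2, add_assoc, zmod2_add_self, add_zero]

/-- The permutation `σ_i` of `W × ZMod 2`. -/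
noncomputable def sigma (i : B) : Equiv.Perm (W × ZMod 2) :=
  (sigmaFun_involutive cs i).toPerm _

@[simp] lemma sigma_apply (i : B) (x : W × ZMod 2) :
    sigma cs i x = (s i * x.1 * s i, x.2 + ind x.1 (s i)) := rfl

lemma conj_pow_aux (a b : W) (n : ℕ) : (a * b * a⁻¹) ^ n = a * b ^ n * a⁻¹ := by
  induction n with
  | zero => simp
  | succ n ih => rw [pow_succ, pow_succ, ih]; group

lemma pow_inv_eq (i j : B) (k : ℕ) :
    ((s i * s j) ^ k)⁻¹ = s j * (s i * s j) ^ k * (s j)⁻¹ := by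
  have h : (s i * s j)⁻¹ = s j * (s i * s j) * (s j)⁻¹ := by
    rw [mul_inv_rev, cs.inv_simple, cs.inv_simple]
    simp [mul_assoc, cs.simple_mul_simple_self]
  rw [← inv_pow, h, conj_pow_aux]

lemma mul_mul_eq_iff (a b c y : W) : a * y * b = c ↔ y = a⁻¹ * c * b⁻¹ := by
  constructor
  · intro h; rw [← h]; simp [mul_assoc]
  · intro h; rw [h]; simp [mul_assoc]

lemma conj_eq_iff (p t y : W) : p * y * p⁻¹ = t ↔ y = p⁻¹ * t * p := by
  constructor
  · intro h; rw [← h]; simp [mul_assoc]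
  · intro h; rw [h]; simp [mul_assoc]

lemma key1 (i j : B) (k : ℕ) :
    ((s i * s j) ^ k)⁻¹ * s j * (s i * s j) ^ k = s j * (s i * s j) ^ (2 * k) := by
  rw [pow_inv_eq, cs.inv_simple, mul_assoc (s j * (s i * s j) ^ k),
    cs.simple_mul_simple_self, mul_one, mul_assoc, ← pow_add, two_mul]

lemma key2 (i j : B) (k : ℕ) :
    ((s i * s j) ^ k)⁻¹ * ((s j)⁻¹ * s i * (s j)⁻¹) * (s i * s j) ^ k
      = s j * (s i * s j) ^ (2 * k + 1) := by
  rw [show 2 * k + 1 = k + (1 + k) from by omega, pow_add, pow_add, pow_one,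
    pow_inv_eq, cs.inv_simple]
  simp only [mul_assoc]
  rw [cs.simple_mul_simple_cancel_left]

lemma sigma_mul_pow_apply (i j : B) (k : ℕ) (x : W × ZMod 2) :
    ((sigma cs i * sigma cs j) ^ k) x =
      ((s i * s j) ^ k * x.1 * ((s i * s j) ^ k)⁻¹,
        x.2 + ∑ r ∈ Finset.range (2 * k), ind x.1 (s j * (s i * s j) ^ r)) := by
  induction k with
  | zero => simp
  | succ k ih =>
    rw [pow_succ', Equiv.Perm.mul_apply, ih]
    rw [Equiv.Perm.mul_apply, sigma_apply, sigma_apply]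
    dsimp only
    rw [Prod.mk.injEq]
    refine ⟨?_, ?_⟩
    case' refine_2 =>
      -- second components
      rw [show 2 * (k + 1) = 2 * k + 1 + 1 by ring, Finset.sum_range_succ, Finset.sum_range_succ]
      have e1 : ind ((s i * s j) ^ k * x.1 * ((s i * s j) ^ k)⁻¹) (s j)
          = ind x.1 (s j * (s i * s j) ^ (2 * k)) := by
        rw [← key1 cs i j k]
        exact ind_congr (conj_eq_iff _ _ _)
      have e2 : ind (s j * ((s i * s j) ^ k * x.1 * ((s i * s j) ^ k)⁻¹) * s j) (s i)
          = ind x.1 (s j * (s i * s j) ^ (2 * k + 1)) := by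
        rw [← key2 cs i j k]
        exact ind_congr ((mul_mul_eq_iff _ _ _ _).trans (conj_eq_iff _ _ _))
      rw [e1, e2]
      ring
    case refine_1 =>
      -- first components
      rw [pow_succ' (s i * s j) k, mul_inv_rev, mul_inv_rev, cs.inv_simple, cs.inv_simple]
      group

lemma isLiftable : M.IsLiftable (fun i => sigma cs i) := by
  intro i j
  apply Equiv.ext
  intro x
  rw [Equiv.Perm.one_apply, sigma_mul_pow_apply, cs.simple_mul_simple_pow i j]
  have hsum : ∑ r ∈ Finset.range (2 * M i j), ind x.1 (s j * (s i * s j) ^ r) = 0 := by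
    rw [two_mul, Finset.sum_range_add]
    have hper : ∀ r, ind x.1 (s j * (s i * s j) ^ (M i j + r)) = ind x.1 (s j * (s i * s j) ^ r) := by
      intro r
      apply ind_congr
      rw [pow_add, cs.simple_mul_simple_pow i j, one_mul]
    simp only [hper]
    exact zmod2_add_self _
  rw [hsum]
  simp

/-- The permutation representation of `W` on `W × ZMod 2`. -/
noncomputable def phi : W →* Equiv.Perm (W × ZMod 2) :=
  cs.lift ⟨fun i => sigma cs i, isLiftable cs⟩

@[simp] lemma phi_simple (i : B) : phi cs (s i) = sigma cs i :=
  cs.lift_apply_simple (isLiftable cs) i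

lemma phi_wordProd (ω : List B) (x : W × ZMod 2) :
    phi cs (π ω) x = (π ω * x.1 * (π ω)⁻¹, x.2 + indSum x.1 (cs.rightInvSeq ω)) := by
  induction ω generalizing x with
  | nil => simp [indSum]
  | cons i ω ih =>
    rw [wordProd_cons, map_mul, Equiv.Perm.mul_apply, ih, phi_simple, sigma_apply]
    dsimp only
    rw [Prod.mk.injEq]
    constructor
    · rw [mul_inv_rev, cs.inv_simple]
      group
    · have : ind (π ω * x.1 * (π ω)⁻¹) (s i) = ind x.1 ((π ω)⁻¹ * s i * (π ω)) :=
        ind_congr (conj_eq_iff _ _ _)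
      rw [this]
      show x.2 + indSum x.1 (cs.rightInvSeq ω) + ind x.1 ((π ω)⁻¹ * s i * π ω)
          = x.2 + indSum x.1 (cs.rightInvSeq (i :: ω))
      rw [show cs.rightInvSeq (i :: ω) = ((π ω)⁻¹ * s i * π ω) :: cs.rightInvSeq ω from rfl,
        indSum_cons]
      ring

/-- The parity of the number of occurrences of an element in the right inversion sequence
depends only on the product of the word. -/
lemma indSum_ris_eq_of_wordProd_eq {ω ω' : List B} (h : π ω = π ω') (t : W) :
    indSum t (cs.rightInvSeq ω) = indSum t (cs.rightInvSeq ω') := by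
  have h1 := phi_wordProd cs ω (t, 0)
  have h2 := phi_wordProd cs ω' (t, 0)
  rw [h] at h1
  rw [h1] at h2
  have := congrArg Prod.snd h2
  simpa using this

/-- Exchange: if right multiplication by `s j` decreases the length, then `s j` appears in the
right inversion sequence. -/
lemma simple_mem_rightInvSeq (ω : List B) (j : B) (h : ℓ (π ω * s j) < ℓ (π ω)) :
    s j ∈ cs.rightInvSeq ω := by
  by_contra hmem
  have h0 : indSum (s j) (cs.rightInvSeq ω) = 0 := indSum_eq_zero_of_not_mem hmem
  obtain ⟨α, hα, hv⟩ := cs.exists_reduced_word' (π ω * s j)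
  have hprod : π (α.concat j) = π ω := by
    rw [wordProd_concat, ← hv, cs.simple_mul_simple_cancel_right]
  have hinv := indSum_ris_eq_of_wordProd_eq cs hprod (s j)
  rw [cs.rightInvSeq_concat, indSum_concat, ind_self, h0] at hinv
  have hmap : indSum (s j) (List.map (⇑(MulAut.conj (s j))) (cs.rightInvSeq α))
      = indSum (s j) (cs.rightInvSeq α) := by
    unfold indSum
    rw [List.map_map]
    congr 1
    apply List.map_congr_left
    intro t _
    apply ind_congr
    simp only [Function.comp_apply, MulAut.conj_apply]
    constructor
    · intro hh
      have h2 : (s j)⁻¹ * (s j) * (s j) = (s j)⁻¹ * (s j * t * (s j)⁻¹) * s j := by rw [← hh]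
      simpa [mul_assoc] using h2
    · intro hh; rw [← hh]; simp [mul_assoc]
  rw [hmap] at hinv
  have hα1 : indSum (s j) (cs.rightInvSeq α) = 1 := by
    have : indSum (s j) (cs.rightInvSeq α) + 1 = 0 := hinv
    revert this
    generalize indSum (s j) (cs.rightInvSeq α) = c
    revert c; decide
  have hmem' : s j ∈ cs.rightInvSeq α := by
    by_contra hc
    rw [indSum_eq_zero_of_not_mem hc] at hα1
    exact one_ne_zero hα1.symm
  have hri := cs.isRightInversion_of_mem_rightInvSeq hα hmem'
  have : ℓ (π α * s j) < ℓ (π α) := hri.2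
  rw [← hv, cs.simple_mul_simple_cancel_right] at this
  omega

/-- Exchange, eraseIdx form. -/
lemma exists_eraseIdx (ω : List B) (j : B) (h : ℓ (π ω * s j) < ℓ (π ω)) :
    ∃ n, n < ω.length ∧ π ω * s j = π (ω.eraseIdx n) := by
  have hmem := simple_mem_rightInvSeq cs ω j h
  obtain ⟨n, hn, hget⟩ := List.mem_iff_getElem.mp hmem
  refine ⟨n, by rwa [cs.length_rightInvSeq] at hn, ?_⟩
  have h2 := cs.wordProd_mul_getD_rightInvSeq ω n
  rw [List.getD_eq_getElem _ _ hn, hget] at h2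
  exact h2

lemma theta_wordProd (θ : W ≃* W) (f : B → B) (hf : ∀ i, θ (s i) = s (f i)) (ω : List B) :
    θ (π ω) = π (ω.map f) := by
  induction ω with
  | nil => simp
  | cons i ω ih => rw [wordProd_cons, map_mul, hf, ih, List.map_cons, wordProd_cons]

lemma length_theta (θ : W ≃* W) (hθ2 : ∀ w : W, θ (θ w) = w)
    (hθS : ∀ i : B, ∃ j : B, θ (s i) = s j) (u : W) : ℓ (θ u) = ℓ u := by
  choose f hf using hθS
  have hle : ∀ v : W, ℓ (θ v) ≤ ℓ v := by
    intro v
    obtain ⟨ω, hω, rfl⟩ := cs.exists_reduced_word' v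
    rw [theta_wordProd cs θ f hf]
    calc ℓ (π (ω.map f)) ≤ (ω.map f).length := cs.length_wordProd_le _
      _ = ω.length := List.length_map _
      _ = ℓ (π ω) := hω.symm
  refine le_antisymm (hle u) ?_
  have := hle (θ u)
  rwa [hθ2] at this

end ExchangeAux

/-- Suppose `w ∈ 𝕴(θ)` is a nonidentity twisted involution such that no reduced
expression `s_1 ⋯ s_k` for `w` satisfies `θ(s_1) = s_k`.  Then for any reduced
expression `s_1 ⋯ s_k` of `w` one has `ℓ(w·θ(s_1)) < ℓ(w)` and
`w = s_2 ⋯ s_k · θ(s_1)`; consequently `v = w·θ(s_1) = s_2 ⋯ s_k` is a twisted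
involution with `ℓ(v) = ℓ(w) − 1`. -/
theorem stmt_4 {B W : Type*} [Group W] {M : CoxeterMatrix B}
    (cs : CoxeterSystem M W) (θ : W ≃* W)
    (hθ2 : ∀ w : W, θ (θ w) = w)
    (hθS : ∀ i : B, ∃ j : B, θ (cs.simple i) = cs.simple j)
    (w : W) (hw : w ∈ twistedInvolutions θ) (hne : w ≠ 1)
    (hno : ¬ ∃ (i : B) (l : List B) (j : B), cs.IsReduced (i :: l ++ [j]) ∧
      cs.wordProd (i :: l ++ [j]) = w ∧ θ (cs.simple i) = cs.simple j)
    (i : B) (l : List B)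
    (hred : cs.IsReduced (i :: l)) (hprod : cs.wordProd (i :: l) = w) :
    cs.length (w * θ (cs.simple i)) < cs.length w ∧
      w = cs.wordProd l * θ (cs.simple i) ∧
      w * θ (cs.simple i) ∈ twistedInvolutions θ ∧
      w * θ (cs.simple i) = cs.wordProd l ∧
      cs.length (w * θ (cs.simple i)) = cs.length w - 1 := by
  classical
  obtain ⟨j, hj⟩ := hθS i
  rw [hj]
  have hθw : θ w = w⁻¹ := hw
  have hk : cs.length w = l.length + 1 := by
    rw [← hprod]
    have hred' : cs.length (cs.wordProd (i :: l)) = (i :: l).length := hred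
    simpa using hred'
  have hwp : w = cs.simple i * cs.wordProd l := by rw [← hprod, cs.wordProd_cons]
  have hws : w * cs.simple j = (θ (cs.wordProd l))⁻¹ := by
    have h1 : θ w = cs.simple j * θ (cs.wordProd l) := by rw [hwp, map_mul, hj]
    have h2 : w = (θ (cs.wordProd l))⁻¹ * cs.simple j := by
      rw [h1] at hθw
      have h3 : w = (cs.simple j * θ (cs.wordProd l))⁻¹ := by rw [hθw, inv_inv]
      rw [h3, mul_inv_rev, cs.inv_simple]
    rw [h2, mul_assoc, cs.simple_mul_simple_self, mul_one]
  have hlp : cs.length (cs.wordProd l) ≤ l.length := by simpa using cs.length_wordProd_le l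
  have hlt : cs.length (w * cs.simple j) < cs.length w := by
    rw [hws, cs.length_inv, ExchangeAux.length_theta cs θ hθ2 hθS]
    omega
  obtain ⟨n, hn, hner⟩ := ExchangeAux.exists_eraseIdx cs (i :: l) j (by rw [hprod]; exact hlt)
  rw [hprod] at hner
  have hv : w * cs.simple j = cs.wordProd l := by
    cases n with
    | zero =>
      rw [List.eraseIdx_cons_zero] at hner
      exact hner
    | succ m =>
      exfalso
      apply hno
      have hm : m < l.length := by simpa using hn
      rw [List.eraseIdx_cons_succ] at hner
      have hprod2 : cs.wordProd ((i :: l.eraseIdx m) ++ [j]) = w := by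
        rw [cs.wordProd_append, cs.wordProd_singleton, ← hner, mul_assoc,
          cs.simple_mul_simple_self, mul_one]
      refine ⟨i, l.eraseIdx m, j, ?_, hprod2, hj⟩
      show cs.length (cs.wordProd ((i :: l.eraseIdx m) ++ [j])) = ((i :: l.eraseIdx m) ++ [j]).length
      have hlen : (l.eraseIdx m).length + 1 = l.length := List.length_eraseIdx_add_one hm
      rw [hprod2, hk]
      simp only [List.length_cons, List.length_append, List.length_nil]
      omega
  refine ⟨hlt, ?_, ?_, hv, ?_⟩
  · rw [← hv, mul_assoc, cs.simple_mul_simple_self, mul_one]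
  · show θ (w * cs.simple j) = (w * cs.simple j)⁻¹
    have hθsj : θ (cs.simple j) = cs.simple i := by rw [← hj, hθ2]
    rw [map_mul, hθw, hθsj, hv, hwp, mul_inv_rev, cs.inv_simple, mul_assoc,
      cs.simple_mul_simple_self, mul_one]
  · rw [hv]
    have h5 : cs.length w ≤ 1 + cs.length (cs.wordProd l) := by
      calc cs.length w = cs.length (cs.simple i * cs.wordProd l) := by rw [← hwp]
        _ ≤ cs.length (cs.simple i) + cs.length (cs.wordProd l) := cs.length_mul_le _ _
        _ = 1 + cs.length (cs.wordProd l) := by rw [cs.length_simple]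
    omega
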